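/- Let m ≥ 1, let (p_S) be a family of real numbers indexed by subsets S ⊆ {1,…,m}, and let α be a real number. For I ⊆ {1,…,m} let p_I* = max{p_U : U ⊆ {1,…,m} \ I}. Assume there exists at least one S ⊆ {1,…,m} with p_S > α. Then for every R ⊆ {1,…,m}, min{|R \ I| : I ⊆ R and p_I* > α} = min{|R ∩ S| : S ⊆ {1,…,m} and p_S > α}, where under the stated assumption both minima are over nonempty collections (in particular I = ∅ satisfies p_∅* > α). -/

import Mathlib

open Finset

/-- `pstar p I` is the maximum of `p U` over all subsets `U ⊆ {1,…,m} \ I`,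
i.e. over all `U` disjoint from `I` (including `U = ∅`). -/
noncomputable def pstar {m : ℕ} (p : Finset (Fin m) → ℝ) (I : Finset (Fin m)) : ℝ :=
  ((univ : Finset (Fin m)).powerset.filter fun U => Disjoint U I).sup' ⟨∅, by simp⟩ p

/-- Theorem 2: the closed-testing shortcut bound
`t_α(R) = min {|R \ I| : I ⊆ R, pstar p I > α}` equals the direct ICP bound
`t̃_α(R) = min {|R ∩ S| : p S > α}`, provided some `S` satisfies `p S > α`
(so both minima range over nonempty collections; in particular `pstar p ∅ > α`). -/
theorem stmt_6 (m : ℕ) (hm : 1 ≤ m) (p : Finset (Fin m) → ℝ) (α : ℝ)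
    (hex : ∃ S : Finset (Fin m), α < p S) :
    ∀ R : Finset (Fin m),
      sInf {n : ℕ | ∃ I : Finset (Fin m), I ⊆ R ∧ α < pstar p I ∧ n = (R \ I).card}
        = sInf {n : ℕ | ∃ S : Finset (Fin m), α < p S ∧ n = (R ∩ S).card} := by
  intro R
  apply le_antisymm
  · apply le_csInf
    · obtain ⟨S, hS⟩ := hex
      exact ⟨(R ∩ S).card, S, hS, rfl⟩
    · rintro n ⟨S, hS, rfl⟩
      apply Nat.sInf_le
      refine ⟨R \ S, sdiff_subset, ?_, ?_⟩
      · rw [pstar]; refine (Finset.lt_sup'_iff _).2 ?_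
        exact ⟨S, by simp [Finset.mem_filter, Finset.disjoint_sdiff], hS⟩
      · rw [Finset.sdiff_sdiff_self_left]
  · apply le_csInf
    · obtain ⟨S, hS⟩ := hex
      refine ⟨(R \ (∅ : Finset (Fin m))).card, ∅, Finset.empty_subset R, ?_, rfl⟩
      rw [pstar]; refine (Finset.lt_sup'_iff _).2 ?_
      exact ⟨S, by simp, hS⟩
    · rintro n ⟨I, hIR, hI, rfl⟩
      rw [pstar] at hI; replace hI := (Finset.lt_sup'_iff _).1 hI
      obtain ⟨U, hU, hpU⟩ := hI
      simp only [Finset.mem_filter] at hU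
      calc sInf {n : ℕ | ∃ S : Finset (Fin m), α < p S ∧ n = (R ∩ S).card}
          ≤ (R ∩ U).card := Nat.sInf_le ⟨U, hpU, rfl⟩
        _ ≤ (R \ I).card := Finset.card_le_card (fun x hx => by
            simp only [Finset.mem_inter] at hx
            simp only [Finset.mem_sdiff]
            exact ⟨hx.1, fun hxI => Finset.notMem_empty x (hU.2.le_bot (Finset.mem_inter.2 ⟨hx.2, hxI⟩))⟩)
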